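/- Let S be a bilateral weighted shift with positive bounded weights. For every non-zero finitely supported vector x (a finite linear combination of the basis vectors e_n, n ∈ ℤ), σ_S(x) = {λ ∈ ℂ : r₂⁻(S) ≤ |λ| ≤ r₃⁺(S)}, where r₂⁻(S) = liminf (1/β_{−n})^{1/n} and r₃⁺(S) = limsup β_n^{1/n}. -/

import Mathlib

open Filter

section Defs

variable {X : Type*} [NormedAddCommGroup X] [NormedSpace ℂ X]

/-- The local resolvent set of `T` at `x`. -/
def localResolventSet (T : X →L[ℂ] X) (x : X) : Set ℂ :=
  {μ | ∃ U : Set ℂ, IsOpen U ∧ μ ∈ U ∧ ∃ f : ℂ → X, AnalyticOnNhd ℂ f U ∧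
    ∀ z ∈ U, (T - z • (1 : X →L[ℂ] X)) (f z) = x}

/-- The local spectrum of `T` at `x`. -/
def localSpectrum (T : X →L[ℂ] X) (x : X) : Set ℂ :=
  (localResolventSet T x)ᶜ

end Defs

open Finset
set_option synthInstance.maxHeartbeats 1000000
set_option maxHeartbeats 1000000




section AuxSeq
-- (assume aux1 contents; we test separately with them pasted)
private noncomputable def gm (a : ℕ → ℝ) (n : ℕ) : ℝ :=
  (∏ i ∈ Finset.range n, a i) ^ ((n : ℝ)⁻¹)

private lemma tendsto_rpow_inv_nat {c : ℝ} (hc : 0 < c) :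
    Tendsto (fun n : ℕ => c ^ ((n : ℝ)⁻¹)) atTop (nhds 1) := by
  have h1 : (fun n : ℕ => c ^ ((n : ℝ)⁻¹)) = fun n : ℕ => Real.exp (Real.log c * (n : ℝ)⁻¹) := by
    funext n
    rw [Real.rpow_def_of_pos hc]
  rw [h1]
  have h2 : Tendsto (fun n : ℕ => Real.log c * (n : ℝ)⁻¹) atTop (nhds 0) := by
    simpa using tendsto_const_nhds.mul (tendsto_inv_atTop_nhds_zero_nat : Tendsto (fun n : ℕ => (n : ℝ)⁻¹) atTop (nhds 0))
  simpa [Function.comp_def] using (Real.continuous_exp.tendsto 0).comp h2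

private lemma rpow_nat_inv_le_iff {x b : ℝ} (hx : 0 ≤ x) (hb : 0 ≤ b) {n : ℕ} (hn : n ≠ 0) :
    x ^ ((n : ℝ)⁻¹) ≤ b ↔ x ≤ b ^ n := by
  constructor
  · intro h
    calc x = (x ^ ((n : ℝ)⁻¹)) ^ n := (Real.rpow_inv_natCast_pow hx hn).symm
      _ ≤ b ^ n := pow_le_pow_left₀ (Real.rpow_nonneg hx _) h n
  · intro h
    calc x ^ ((n : ℝ)⁻¹) ≤ (b ^ n) ^ ((n : ℝ)⁻¹) := Real.rpow_le_rpow hx h (by positivity)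
      _ = b := Real.pow_rpow_inv_natCast hb hn

private lemma le_rpow_nat_inv_iff {x b : ℝ} (hx : 0 ≤ x) (hb : 0 ≤ b) {n : ℕ} (hn : n ≠ 0) :
    b ≤ x ^ ((n : ℝ)⁻¹) ↔ b ^ n ≤ x := by
  constructor
  · intro h
    calc b ^ n ≤ (x ^ ((n : ℝ)⁻¹)) ^ n := pow_le_pow_left₀ hb h n
      _ = x := Real.rpow_inv_natCast_pow hx hn
  · intro h
    calc b = (b ^ n) ^ ((n : ℝ)⁻¹) := (Real.pow_rpow_inv_natCast hb hn).symm
      _ ≤ x ^ ((n : ℝ)⁻¹) := Real.rpow_le_rpow (by positivity) h (by positivity)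

variable {a : ℕ → ℝ} {M : ℝ}

private lemma prod_pos' (ha : ∀ i, 0 < a i) (n : ℕ) : 0 < ∏ i ∈ range n, a i :=
  Finset.prod_pos fun i _ => ha i

private lemma gm_pos (ha : ∀ i, 0 < a i) (n : ℕ) : 0 < gm a n :=
  Real.rpow_pos_of_pos (prod_pos' ha n) _

private lemma gm_le_max (ha : ∀ i, 0 < a i) (hM : ∀ i, a i ≤ M) (n : ℕ) :
    gm a n ≤ max M 1 := by
  rcases Nat.eq_zero_or_pos n with rfl | hn
  · simp [gm]
  · rw [gm, rpow_nat_inv_le_iff (prod_pos' ha n).le (le_trans zero_le_one (le_max_right M 1))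
      hn.ne']
    calc ∏ i ∈ range n, a i ≤ ∏ _i ∈ range n, max M 1 :=
          Finset.prod_le_prod (fun i _ => (ha i).le)
            (fun i _ => (hM i).trans (le_max_left M 1))
      _ = (max M 1) ^ n := by simp

private lemma gm_bddAbove (ha : ∀ i, 0 < a i) (hM : ∀ i, a i ≤ M) :
    IsBoundedUnder (· ≤ ·) atTop (gm a) :=
  isBoundedUnder_of ⟨max M 1, gm_le_max ha hM⟩

private lemma gm_bddBelow (ha : ∀ i, 0 < a i) :
    IsBoundedUnder (· ≥ ·) atTop (gm a) :=
  isBoundedUnder_of ⟨0, fun n => (gm_pos ha n).le⟩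

private lemma limsup_gm_nonneg (ha : ∀ i, 0 < a i) (hM : ∀ i, a i ≤ M) :
    0 ≤ atTop.limsup (gm a) :=
  le_limsup_of_frequently_le (Frequently.of_forall fun n => (gm_pos ha n).le)
    (gm_bddAbove ha hM)

private lemma liminf_gm_nonneg (ha : ∀ i, 0 < a i) (hM : ∀ i, a i ≤ M) :
    0 ≤ atTop.liminf (gm a) :=
  le_liminf_of_le ((gm_bddAbove ha hM).isCoboundedUnder_ge)
    (Eventually.of_forall fun n => (gm_pos ha n).le)


private lemma limsup_core {u v : ℕ → ℝ} {C : ℝ}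
    (hu0 : ∀ n, 0 ≤ u n) (huC : ∀ n, u n ≤ C) (hv0 : ∀ n, 0 ≤ v n) (hvC : ∀ n, v n ≤ C)
    (key : ∀ b' b : ℝ, 0 < b' → b' < b → (∀ᶠ n in atTop, u n ≤ b') →
      ∀ᶠ n in atTop, v n ≤ b) :
    atTop.limsup v ≤ atTop.limsup u := by
  have hubd : IsBoundedUnder (· ≤ ·) atTop u := isBoundedUnder_of ⟨C, huC⟩
  have hvcb : IsCoboundedUnder (· ≤ ·) atTop v :=
    (isBoundedUnder_of ⟨(0 : ℝ), hv0⟩ :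
      IsBoundedUnder (· ≥ ·) atTop v).isCoboundedUnder_le
  have hL0 : 0 ≤ atTop.limsup u :=
    le_limsup_of_frequently_le (Frequently.of_forall hu0) hubd
  by_contra hlt
  push_neg at hlt
  set L := atTop.limsup u with hLdef
  set L' := atTop.limsup v with hL'def
  have h1 : ∀ᶠ n in atTop, u n < (3 * L + L') / 4 :=
    eventually_lt_of_limsup_lt (by linarith) hubd
  have h2 : ∀ᶠ n in atTop, v n ≤ (L + L') / 2 :=
    key _ _ (by linarith) (by linarith) (h1.mono fun n h => h.le)
  have : L' ≤ (L + L') / 2 := limsup_le_of_le hvcb h2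
  linarith

private lemma liminf_core {u v : ℕ → ℝ} {C : ℝ}
    (hu0 : ∀ n, 0 ≤ u n) (huC : ∀ n, u n ≤ C) (hv0 : ∀ n, 0 ≤ v n) (hvC : ∀ n, v n ≤ C)
    (key : ∀ b b' : ℝ, 0 < b → b < b' → (∀ᶠ n in atTop, b' ≤ u n) →
      ∀ᶠ n in atTop, b ≤ v n) :
    atTop.liminf u ≤ atTop.liminf v := by
  have hucb : IsCoboundedUnder (· ≥ ·) atTop u :=
    (isBoundedUnder_of ⟨C, huC⟩ : IsBoundedUnder (· ≤ ·) atTop u).isCoboundedUnder_ge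
  have hvcb : IsCoboundedUnder (· ≥ ·) atTop v :=
    (isBoundedUnder_of ⟨C, hvC⟩ : IsBoundedUnder (· ≤ ·) atTop v).isCoboundedUnder_ge
  have hubd : IsBoundedUnder (· ≥ ·) atTop u := isBoundedUnder_of ⟨0, hu0⟩
  have hL'0 : 0 ≤ atTop.liminf v :=
    le_liminf_of_le hvcb (Eventually.of_forall hv0)
  by_contra hlt
  push_neg at hlt
  set L := atTop.liminf u with hLdef
  set L' := atTop.liminf v with hL'def
  have h1 : ∀ᶠ n in atTop, (L' + 3 * L) / 4 < u n :=
    eventually_lt_of_lt_liminf (by linarith) hubd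
  have h2 : ∀ᶠ n in atTop, (L' + L) / 2 ≤ v n :=
    key _ _ (by linarith) (by linarith) (h1.mono fun n h => h.le)
  have : (L' + L) / 2 ≤ L' := le_liminf_of_le hvcb h2
  linarith

private lemma limsup_gm_succ (ha : ∀ i, 0 < a i) (hM : ∀ i, a i ≤ M) :
    atTop.limsup (gm fun i => a (i + 1)) = atTop.limsup (gm a) := by
  have ha' : ∀ i, 0 < a (i + 1) := fun i => ha _
  have hM' : ∀ i, a (i + 1) ≤ M := fun i => hM _
  apply le_antisymm
  · -- limsup gm' ≤ limsup gm
    apply limsup_core (fun n => (gm_pos ha n).le) (gm_le_max ha hM)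
      (fun n => (gm_pos ha' n).le) (gm_le_max ha' hM')
    intro b' b hb' hbb hev
    have hev1 : ∀ᶠ n : ℕ in atTop, gm a (n + 1) ≤ b' :=
      (tendsto_add_atTop_nat 1).eventually hev
    have hc : (0 : ℝ) < b' / a 0 := div_pos hb' (ha 0)
    have hfac : ∀ᶠ n : ℕ in atTop, (b' / a 0) ^ ((n : ℝ)⁻¹) < b / b' :=
      (tendsto_rpow_inv_nat hc).eventually_lt_const
        ((one_lt_div hb').mpr hbb)
    filter_upwards [hev1, hfac, eventually_ne_atTop 0] with n h1 h2 hn0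
    have hb : (0 : ℝ) < b := hb'.trans hbb
    have ha0 : a 0 ≠ 0 := (ha 0).ne'
    rw [gm, rpow_nat_inv_le_iff (prod_pos' ha' n).le hb.le hn0]
    have hsh : (∏ i ∈ range n, a (i + 1)) * a 0 = ∏ i ∈ range (n + 1), a i :=
      (Finset.prod_range_succ' a n).symm
    have hP : ∏ i ∈ range (n + 1), a i ≤ b' ^ (n + 1) := by
      rw [gm, rpow_nat_inv_le_iff (prod_pos' ha (n + 1)).le hb'.le (Nat.succ_ne_zero n)] at h1
      exact h1
    have h3 : b' / a 0 ≤ (b / b') ^ n :=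
      (rpow_nat_inv_le_iff hc.le (div_nonneg hb.le hb'.le) hn0).mp h2.le
    have h4 : ∏ i ∈ range n, a (i + 1) ≤ b' ^ (n + 1) * (a 0)⁻¹ := by
      have h5 : (∏ i ∈ range n, a (i + 1)) = (∏ i ∈ range (n + 1), a i) * (a 0)⁻¹ := by
        rw [← hsh, mul_inv_cancel_right₀ ha0]
      rw [h5]
      exact mul_le_mul_of_nonneg_right hP (inv_pos.mpr (ha 0)).le
    calc ∏ i ∈ range n, a (i + 1) ≤ b' ^ (n + 1) * (a 0)⁻¹ := h4
      _ = b' ^ n * (b' / a 0) := by rw [pow_succ, div_eq_mul_inv, mul_assoc]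
      _ ≤ b' ^ n * (b / b') ^ n := by
          apply mul_le_mul_of_nonneg_left h3 (pow_nonneg hb'.le n)
      _ = b ^ n := by
          rw [← mul_pow]
          congr 1
          field_simp [hb'.ne']
  · -- limsup gm ≤ limsup gm'
    apply limsup_core (fun n => (gm_pos ha' n).le) (gm_le_max ha' hM')
      (fun n => (gm_pos ha n).le) (gm_le_max ha hM)
    intro b' b hb' hbb hev
    have hb : (0 : ℝ) < b := hb'.trans hbb
    have hc : (0 : ℝ) < a 0 / b' := div_pos (ha 0) hb'
    have hfac : ∀ᶠ n : ℕ in atTop, (a 0 / b') ^ ((n : ℝ)⁻¹) < b / b' :=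
      (tendsto_rpow_inv_nat hc).eventually_lt_const ((one_lt_div hb').mpr hbb)
    obtain ⟨n₀, hn₀⟩ := eventually_atTop.1 hev
    obtain ⟨n₁, hn₁⟩ := eventually_atTop.1 hfac
    rw [eventually_atTop]
    refine ⟨n₀ + n₁ + 1, fun n hn => ?_⟩
    obtain ⟨m, rfl⟩ : ∃ m, n = m + 1 := by
      cases n with
      | zero => omega
      | succ m => exact ⟨m, rfl⟩
    have hm0 : m ≥ n₀ := by omega
    have hmn : m + 1 ≥ n₁ := by omega
    have h1 : gm (fun i => a (i + 1)) m ≤ b' := hn₀ m hm0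
    have h2 : (a 0 / b') ^ (((m + 1 : ℕ) : ℝ)⁻¹) < b / b' := hn₁ (m + 1) hmn
    rw [gm, rpow_nat_inv_le_iff (prod_pos' ha (m + 1)).le hb.le (Nat.succ_ne_zero m)]
    have hP : ∏ i ∈ range m, a (i + 1) ≤ b' ^ m := by
      rcases Nat.eq_zero_or_pos m with rfl | hm
      · simp
      · rw [gm, rpow_nat_inv_le_iff (prod_pos' ha' m).le hb'.le hm.ne'] at h1
        exact h1
    have h3 : a 0 / b' ≤ (b / b') ^ (m + 1) :=
      (rpow_nat_inv_le_iff hc.le (div_nonneg hb.le hb'.le) (Nat.succ_ne_zero m)).mp h2.le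
    calc ∏ i ∈ range (m + 1), a i = (∏ i ∈ range m, a (i + 1)) * a 0 :=
          Finset.prod_range_succ' a m
      _ ≤ b' ^ m * a 0 := mul_le_mul_of_nonneg_right hP (ha 0).le
      _ = b' ^ (m + 1) * (a 0 / b') := by
          field_simp [hb'.ne']
          ring
      _ ≤ b' ^ (m + 1) * (b / b') ^ (m + 1) := by
          apply mul_le_mul_of_nonneg_left h3 (pow_nonneg hb'.le (m + 1))
      _ = b ^ (m + 1) := by
          rw [← mul_pow]; congr 1; field_simp [hb'.ne']


private lemma liminf_gm_succ (ha : ∀ i, 0 < a i) (hM : ∀ i, a i ≤ M) :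
    atTop.liminf (gm fun i => a (i + 1)) = atTop.liminf (gm a) := by
  have ha' : ∀ i, 0 < a (i + 1) := fun i => ha _
  have hM' : ∀ i, a (i + 1) ≤ M := fun i => hM _
  apply le_antisymm
  · -- liminf gm' ≤ liminf gm
    apply liminf_core (fun n => (gm_pos ha' n).le) (gm_le_max ha' hM')
      (fun n => (gm_pos ha n).le) (gm_le_max ha hM)
    intro b b' hb hbb hev
    have hb' : (0 : ℝ) < b' := hb.trans hbb
    have hgeo : ∀ᶠ n : ℕ in atTop, (b / b') ^ n < a 0 / b :=
      (tendsto_pow_atTop_nhds_zero_of_lt_one (div_nonneg hb.le hb'.le)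
        ((div_lt_one hb').mpr hbb)).eventually_lt_const (div_pos (ha 0) hb)
    obtain ⟨n₀, hn₀⟩ := eventually_atTop.1 hev
    obtain ⟨n₁, hn₁⟩ := eventually_atTop.1 hgeo
    rw [eventually_atTop]
    refine ⟨n₀ + n₁ + 1, fun n hn => ?_⟩
    obtain ⟨m, rfl⟩ : ∃ m, n = m + 1 := by
      cases n with
      | zero => omega
      | succ m => exact ⟨m, rfl⟩
    have h1 : b' ≤ gm (fun i => a (i + 1)) m := hn₀ m (by omega)
    have h2 : (b / b') ^ m < a 0 / b := hn₁ m (by omega)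
    rw [gm, le_rpow_nat_inv_iff (prod_pos' ha (m + 1)).le hb.le (Nat.succ_ne_zero m)]
    have hP : b' ^ m ≤ ∏ i ∈ range m, a (i + 1) := by
      rcases Nat.eq_zero_or_pos m with rfl | hm
      · simp
      · rw [gm, le_rpow_nat_inv_iff (prod_pos' ha' m).le hb'.le hm.ne'] at h1
        exact h1
    calc b ^ (m + 1) = b' ^ m * ((b / b') ^ m * b) := by
          field_simp [hb'.ne']
          rw [mul_right_comm, ← mul_pow, mul_div_cancel₀ b hb'.ne', pow_succ]
      _ ≤ b' ^ m * a 0 := by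
          apply mul_le_mul_of_nonneg_left _ (pow_nonneg hb'.le m)
          calc (b / b') ^ m * b ≤ (a 0 / b) * b :=
                mul_le_mul_of_nonneg_right h2.le hb.le
            _ = a 0 := by field_simp
      _ ≤ (∏ i ∈ range m, a (i + 1)) * a 0 :=
          mul_le_mul_of_nonneg_right hP (ha 0).le
      _ = ∏ i ∈ range (m + 1), a i := (Finset.prod_range_succ' a m).symm
  · -- liminf gm ≤ liminf gm'
    apply liminf_core (fun n => (gm_pos ha n).le) (gm_le_max ha hM)
      (fun n => (gm_pos ha' n).le) (gm_le_max ha' hM')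
    intro b b' hb hbb hev
    have hb' : (0 : ℝ) < b' := hb.trans hbb
    have ha0 : a 0 ≠ 0 := (ha 0).ne'
    have hev1 : ∀ᶠ n : ℕ in atTop, b' ≤ gm a (n + 1) :=
      (tendsto_add_atTop_nat 1).eventually hev
    have hgeo : ∀ᶠ n : ℕ in atTop, (b / b') ^ n < b' / a 0 :=
      (tendsto_pow_atTop_nhds_zero_of_lt_one (div_nonneg hb.le hb'.le)
        ((div_lt_one hb').mpr hbb)).eventually_lt_const (div_pos hb' (ha 0))
    filter_upwards [hev1, hgeo, eventually_ne_atTop 0] with n h1 h2 hn0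
    rw [gm, le_rpow_nat_inv_iff (prod_pos' ha' n).le hb.le hn0]
    have hP : b' ^ (n + 1) ≤ ∏ i ∈ range (n + 1), a i := by
      rw [gm, le_rpow_nat_inv_iff (prod_pos' ha (n + 1)).le hb'.le (Nat.succ_ne_zero n)] at h1
      exact h1
    have h5 : (∏ i ∈ range n, a (i + 1)) = (∏ i ∈ range (n + 1), a i) * (a 0)⁻¹ := by
      rw [Finset.prod_range_succ' a n, mul_inv_cancel_right₀ ha0]
    calc b ^ n = b' ^ n * (b / b') ^ n := by
          rw [← mul_pow]
          congr 1
          field_simp [hb'.ne']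
      _ ≤ b' ^ n * (b' / a 0) :=
          mul_le_mul_of_nonneg_left h2.le (pow_nonneg hb'.le n)
      _ = b' ^ (n + 1) * (a 0)⁻¹ := by
          rw [pow_succ, div_eq_mul_inv, mul_assoc]
      _ ≤ (∏ i ∈ range (n + 1), a i) * (a 0)⁻¹ :=
          mul_le_mul_of_nonneg_right hP (inv_pos.mpr (ha 0)).le
      _ = ∏ i ∈ range n, a (i + 1) := h5.symm

end AuxSeq

section AuxShift

variable {ω : ℤ → ℝ} {M : ℝ}

private noncomputable def gmp (ω : ℤ → ℝ) (k : ℤ) : ℕ → ℝ :=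
  gm fun i : ℕ => ω (k + i)

private noncomputable def gmm (ω : ℤ → ℝ) (k : ℤ) : ℕ → ℝ :=
  gm fun i : ℕ => ω (k - 1 - i)

private lemma gm_congr {a b : ℕ → ℝ} (h : ∀ i, a i = b i) : gm a = gm b := by
  funext n
  unfold gm
  congr 1
  exact Finset.prod_congr rfl fun i _ => h i

private lemma limsup_gmp_eq (hpos : ∀ n, 0 < ω n) (hbd : ∀ n, ω n ≤ M) (k : ℤ) :
    atTop.limsup (gmp ω k) = atTop.limsup (gmp ω 0) := by
  induction k using Int.induction_on with
  | zero => rfl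
  | succ j hj =>
      rw [← hj]
      have hfun : gmp ω (j + 1) = gm fun i : ℕ => (fun i : ℕ => ω (j + i)) (i + 1) :=
        gm_congr fun i => congrArg ω (by push_cast; ring)
      rw [hfun]
      exact limsup_gm_succ (a := fun i : ℕ => ω (j + i)) (fun i => hpos _) (fun i => hbd _)
  | pred j hj =>
      rw [← hj]
      have hfun : gmp ω (-j) = gm fun i : ℕ => (fun i : ℕ => ω (-j - 1 + i)) (i + 1) :=
        gm_congr fun i => congrArg ω (by push_cast; ring)
      have hfun2 : gmp ω (-j - 1) = gm fun i : ℕ => ω (-j - 1 + i) := rfl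
      rw [hfun2, hfun]
      exact (limsup_gm_succ (a := fun i : ℕ => ω (-j - 1 + i)) (fun i => hpos _) (fun i => hbd _)).symm

private lemma liminf_gmm_eq (hpos : ∀ n, 0 < ω n) (hbd : ∀ n, ω n ≤ M) (k : ℤ) :
    atTop.liminf (gmm ω k) = atTop.liminf (gmm ω 0) := by
  induction k using Int.induction_on with
  | zero => rfl
  | succ j hj =>
      rw [← hj]
      have hfun : gmm ω j = gm fun i : ℕ => (fun i : ℕ => ω (j + 1 - 1 - i)) (i + 1) :=
        gm_congr fun i => congrArg ω (by push_cast; ring)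
      have hfun2 : gmm ω (j + 1) = gm fun i : ℕ => ω (j + 1 - 1 - i) := rfl
      rw [hfun2, hfun]
      exact (liminf_gm_succ (a := fun i : ℕ => ω (j + 1 - 1 - i)) (fun i => hpos _) (fun i => hbd _)).symm
  | pred j hj =>
      rw [← hj]
      have hfun : gmm ω (-j - 1) = gm fun i : ℕ => (fun i : ℕ => ω (-j - 1 - i)) (i + 1) :=
        gm_congr fun i => congrArg ω (by push_cast; ring)
      have hfun2 : gmm ω (-j) = gm fun i : ℕ => ω (-j - 1 - i) := rfl
      rw [hfun, hfun2]
      exact liminf_gm_succ (a := fun i : ℕ => ω (-j - 1 - i)) (fun i => hpos _) (fun i => hbd _)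

end AuxShift
set_option maxHeartbeats 1000000

section OpAux

variable {H : Type*} [NormedAddCommGroup H] [InnerProductSpace ℂ H] [CompleteSpace H]

private lemma dense_span_basis (e : HilbertBasis ℤ ℂ H) :
    Dense (↑(Submodule.span ℂ (Set.range fun n : ℤ => e n)) : Set H) :=
  Submodule.dense_iff_topologicalClosure_eq_top.mpr e.dense_span

private lemma inner_basis (e : HilbertBasis ℤ ℂ H) (i j : ℤ) :
    (inner ℂ (e i) (e j) : ℂ) = if i = j then 1 else 0 :=
  orthonormal_iff_ite.mp e.orthonormal i j

private lemma norm_basis (e : HilbertBasis ℤ ℂ H) (n : ℤ) : ‖e n‖ = 1 :=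
  e.orthonormal.1 n

private lemma inner_S (S : H →L[ℂ] H) (e : HilbertBasis ℤ ℂ H) (ω : ℤ → ℝ)
    (hS : ∀ n, S (e n) = (ω n : ℂ) • e (n + 1)) (n : ℤ) (y : H) :
    (inner ℂ (e n) (S y) : ℂ) = (ω (n - 1) : ℂ) * (inner ℂ (e (n - 1)) y : ℂ) := by
  have key : (innerSL ℂ (e n)).comp S = (ω (n - 1) : ℂ) • innerSL ℂ (e (n - 1)) := by
    apply ContinuousLinearMap.ext_on (dense_span_basis e)
    rintro _ ⟨k, rfl⟩
    simp only [ContinuousLinearMap.coe_comp', Function.comp_apply,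
      ContinuousLinearMap.coe_smul', Pi.smul_apply, innerSL_apply_apply, hS k,
      inner_smul_right, inner_basis, smul_eq_mul]
    by_cases h : n = k + 1
    · have h' : n - 1 = k := by omega
      simp [h, h']
    · have h' : ¬(n - 1 = k) := by omega
      simp [h, h']
  have h2 : ((innerSL ℂ (e n)).comp S) y = ((ω (n - 1) : ℂ) • innerSL ℂ (e (n - 1))) y := by
    rw [key]
  simpa using h2

private lemma pow_basis (S : H →L[ℂ] H) (e : HilbertBasis ℤ ℂ H) (ω : ℤ → ℝ)
    (hS : ∀ n, S (e n) = (ω n : ℂ) • e (n + 1)) (m : ℕ) (k : ℤ) :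
    (S ^ m) (e k) = ((∏ i ∈ Finset.range m, ω (k + i) : ℝ) : ℂ) • e (k + m) := by
  induction m with
  | zero => simp
  | succ m ih =>
      have h1 : S ^ (m + 1) = S * S ^ m := by rw [pow_succ']
      rw [h1, ContinuousLinearMap.mul_apply, ih, map_smul, hS (k + m)]
      rw [smul_smul, Finset.prod_range_succ]
      have hidx : k + ((m : ℤ) + 1) = k + (m : ℤ) + 1 := by ring
      push_cast [hidx]
      rw [mul_comm]

end OpAux

section Part1

variable {H : Type*} [NormedAddCommGroup H] [InnerProductSpace ℂ H] [CompleteSpace H]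

private def goodSet (S : H →L[ℂ] H) (U : Set ℂ) : Submodule ℂ H where
  carrier := {x | ∃ f : ℂ → H, AnalyticOnNhd ℂ f U ∧
    ∀ z ∈ U, (S - z • (1 : H →L[ℂ] H)) (f z) = x}
  add_mem' := by
    rintro x y ⟨f, hf, hfe⟩ ⟨g, hg, hge⟩
    exact ⟨fun z => f z + g z, hf.add hg, fun z hz => by
      rw [map_add, hfe z hz, hge z hz]⟩
  zero_mem' := ⟨fun _ => 0, analyticOnNhd_const, fun z hz => by simp⟩
  smul_mem' := by
    rintro c x ⟨f, hf, hfe⟩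
    exact ⟨fun z => c • f z, analyticOnNhd_const.smul hf, fun z hz => by
      rw [map_smul, hfe z hz]⟩

private lemma sum_mkPiRing (c : ℕ → H) (w : ℂ) :
    FormalMultilinearSeries.sum
      (fun n => ContinuousMultilinearMap.mkPiRing ℂ (Fin n) (c n)) w
      = ∑' n : ℕ, w ^ n • c n := by
  unfold FormalMultilinearSeries.sum
  congr 1
  funext n
  simp [ContinuousMultilinearMap.mkPiRing_apply]

private lemma basis_mem_goodSet_outer (S : H →L[ℂ] H) (e : HilbertBasis ℤ ℂ H)
    (ω : ℤ → ℝ) (hpos : ∀ n, 0 < ω n) {M : ℝ} (hbd : ∀ n, ω n ≤ M)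
    (hS : ∀ n, S (e n) = (ω n : ℂ) • e (n + 1)) (k : ℤ) {R : ℝ}
    (hlim : atTop.limsup (gmp ω k) = R) :
    e k ∈ goodSet S {z : ℂ | R < ‖z‖} := by
  have hgm : ∀ i : ℕ, 0 < ω (k + i) := fun i => hpos _
  have hgmM : ∀ i : ℕ, ω (k + i) ≤ M := fun i => hbd _
  have hR0 : 0 ≤ R := hlim ▸ limsup_gm_nonneg hgm hgmM
  set c : ℕ → H := fun n => (S ^ n) (e k) with hcdef
  have hcnorm : ∀ n, ‖c n‖ = ∏ i ∈ Finset.range n, ω (k + i) := by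
    intro n
    rw [hcdef]
    simp only [pow_basis S e ω hS n k]
    rw [norm_smul, norm_basis, mul_one, Complex.norm_real,
      Real.norm_eq_abs, abs_of_pos (prod_pos' hgm n)]
  have hSc : ∀ n, S (c n) = c (n + 1) := by
    intro n
    rw [hcdef]
    simp only []
    rw [pow_succ']
    rfl
  have hev : ∀ ρ : ℝ, R < ρ → ∀ᶠ n in atTop, ‖c n‖ ≤ ρ ^ n := by
    intro ρ hρ
    have h1 : ∀ᶠ n in atTop, gmp ω k n < ρ :=
      eventually_lt_of_limsup_lt (hlim ▸ hρ) (gm_bddAbove hgm hgmM)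
    filter_upwards [h1, eventually_ne_atTop 0] with n hn hn0
    rw [hcnorm]
    exact (rpow_nat_inv_le_iff (prod_pos' hgm n).le (hR0.trans hρ.le) hn0).mp hn.le
  set p : FormalMultilinearSeries ℂ ℂ H :=
    fun n => ContinuousMultilinearMap.mkPiRing ℂ (Fin n) (c n) with hpdef
  have hpnorm : ∀ n, ‖p n‖ = ‖c n‖ := fun n =>
    ContinuousMultilinearMap.norm_mkPiRing (c n)
  have hrad : ∀ ρ : ℝ, R < ρ → ENNReal.ofReal ρ⁻¹ ≤ p.radius := by
    intro ρ hρ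
    have hρ0 : 0 < ρ := lt_of_le_of_lt hR0 hρ
    have hbound : ∀ᶠ n in atTop, ‖p n‖ * ((ρ⁻¹).toNNReal : ℝ) ^ n ≤ 1 := by
      filter_upwards [hev ρ hρ] with n hn
      rw [hpnorm, Real.coe_toNNReal _ (inv_nonneg.mpr hρ0.le)]
      calc ‖c n‖ * (ρ⁻¹) ^ n ≤ ρ ^ n * (ρ⁻¹) ^ n :=
            mul_le_mul_of_nonneg_right hn (by positivity)
        _ = 1 := by
            rw [← mul_pow, mul_inv_cancel₀ hρ0.ne', one_pow]
    have := p.le_radius_of_eventually_le _ hbound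
    simpa [ENNReal.ofReal] using this
  refine ⟨fun z => -(z⁻¹ • p.sum z⁻¹), ?_, ?_⟩
  · -- analyticity
    intro z hz
    have hz' : R < ‖z‖ := hz
    have hz0 : z ≠ 0 := by
      intro h
      rw [h] at hz'
      simp at hz'
      exact absurd hz' (not_lt.mpr hR0)
    set ρ := (R + ‖z‖) / 2 with hρdef
    have hρR : R < ρ := by
      rw [hρdef]; linarith
    have hρz : ρ < ‖z‖ := by
      rw [hρdef]; linarith
    have hρ0 : 0 < ρ := lt_of_le_of_lt hR0 hρR
    have hradpos : 0 < p.radius :=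
      lt_of_lt_of_le (by simp [ENNReal.ofReal_pos, inv_pos, hρ0]) (hrad ρ hρR)
    have hmem : z⁻¹ ∈ Metric.eball (0 : ℂ) p.radius := by
      rw [Metric.mem_eball, edist_zero_right]
      apply lt_of_lt_of_le _ (hrad ρ hρR)
      rw [← ofReal_norm]
      apply ENNReal.ofReal_lt_ofReal_iff_of_nonneg (norm_nonneg _) |>.mpr
      rw [norm_inv]
      exact inv_strictAnti₀ hρ0 hρz
    have hsum_an : AnalyticAt ℂ p.sum z⁻¹ :=
      (p.hasFPowerSeriesOnBall hradpos).analyticAt_of_mem hmem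
    have hinv : AnalyticAt ℂ (fun w : ℂ => w⁻¹) z := by
      have hid : AnalyticAt ℂ (fun w : ℂ => w) z := analyticAt_id
      exact hid.inv hz0
    have hcomp : AnalyticAt ℂ (fun w : ℂ => p.sum w⁻¹) z := hsum_an.comp hinv
    exact (hinv.smul hcomp).neg
  · -- resolvent identity
    intro z hz
    have hz' : R < ‖z‖ := hz
    have hz0 : z ≠ 0 := by
      intro h
      rw [h] at hz'
      simp at hz'
      exact absurd hz' (not_lt.mpr hR0)
    set ρ := (R + ‖z‖) / 2 with hρdef
    have hρR : R < ρ := by rw [hρdef]; linarith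
    have hρz : ρ < ‖z‖ := by rw [hρdef]; linarith
    have hρ0 : 0 < ρ := lt_of_le_of_lt hR0 hρR
    have hz0' : (0:ℝ) < ‖z‖ := hρ0.trans hρz
    have hsum0 : Summable (fun n : ℕ => (z⁻¹) ^ n • c n) := by
      apply Summable.of_norm_bounded_eventually_nat (g := fun n => (ρ / ‖z‖) ^ n)
        (summable_geometric_of_lt_one (by positivity) ((div_lt_one hz0').mpr hρz))
      filter_upwards [hev ρ hρR] with n hn
      rw [norm_smul, norm_pow, norm_inv]
      rw [div_pow]
      rw [div_eq_mul_inv, ← inv_pow]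
      exact mul_le_mul_of_nonneg_left hn (by positivity) |>.trans_eq (mul_comm _ _)
    have hsum1 : Summable (fun n : ℕ => (z⁻¹) ^ (n + 1) • c n) := by
      have : (fun n : ℕ => (z⁻¹) ^ (n + 1) • c n)
          = fun n : ℕ => z⁻¹ • ((z⁻¹) ^ n • c n) := by
        funext n
        rw [smul_smul, pow_succ']
      rw [this]
      exact hsum0.const_smul _
    have hsum2 : Summable (fun n : ℕ => (z⁻¹) ^ (n + 1) • c (n + 1)) :=
      (summable_nat_add_iff 1).mpr hsum0
    have hfz : -(z⁻¹ • p.sum z⁻¹) = -∑' n : ℕ, (z⁻¹) ^ (n + 1) • c n := by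
      rw [hpdef, sum_mkPiRing c, ← Summable.tsum_const_smul _ hsum0]
      congr 1
      exact tsum_congr fun n => by rw [smul_smul, pow_succ']
    show (S - z • (1 : H →L[ℂ] H)) (-(z⁻¹ • p.sum z⁻¹)) = e k
    rw [hfz]
    rw [ContinuousLinearMap.sub_apply, ContinuousLinearMap.smul_apply,
      ContinuousLinearMap.one_apply]
    have hmapS : S (-∑' n : ℕ, (z⁻¹) ^ (n + 1) • c n)
        = -∑' n : ℕ, (z⁻¹) ^ (n + 1) • c (n + 1) := by
      rw [map_neg, ContinuousLinearMap.map_tsum S hsum1]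
      congr 1
      exact tsum_congr fun n => by rw [ContinuousLinearMap.map_smul, hSc]
    have hmapz : z • (-∑' n : ℕ, (z⁻¹) ^ (n + 1) • c n)
        = -(c 0 + ∑' n : ℕ, (z⁻¹) ^ (n + 1) • c (n + 1)) := by
      rw [smul_neg, ← Summable.tsum_const_smul _ hsum1]
      have heq : (fun n : ℕ => z • ((z⁻¹) ^ (n + 1) • c n))
          = fun n : ℕ => (z⁻¹) ^ n • c n := by
        funext n
        rw [smul_smul, pow_succ', ← mul_assoc, mul_inv_cancel₀ hz0, one_mul]
      rw [heq, Summable.tsum_eq_zero_add hsum0]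
      simp
    rw [hmapS, hmapz]
    have : c 0 = e k := by rw [hcdef]; simp
    rw [← this]
    abel

private lemma basis_mem_goodSet_inner (S : H →L[ℂ] H) (e : HilbertBasis ℤ ℂ H)
    (ω : ℤ → ℝ) (hpos : ∀ n, 0 < ω n) {M : ℝ} (hbd : ∀ n, ω n ≤ M)
    (hS : ∀ n, S (e n) = (ω n : ℂ) • e (n + 1)) (k : ℤ) {R : ℝ}
    (hlim : atTop.liminf (gmm ω k) = R) :
    e k ∈ goodSet S {z : ℂ | ‖z‖ < R} := by
  have hgm : ∀ i : ℕ, 0 < ω (k - 1 - i) := fun i => hpos _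
  have hgmM : ∀ i : ℕ, ω (k - 1 - i) ≤ M := fun i => hbd _
  set γ : ℕ → ℝ := fun m => (∏ i ∈ Finset.range m, ω (k - 1 - i))⁻¹ with hγdef
  have hγpos : ∀ m, 0 < γ m := fun m => inv_pos.mpr (prod_pos' hgm m)
  have hγrec : ∀ n : ℕ, γ (n + 1) * ω (k - 1 - n) = γ n := by
    intro n
    rw [hγdef]
    simp only [Finset.prod_range_succ]
    rw [mul_inv]
    rw [mul_assoc, inv_mul_cancel₀ (hpos (k - 1 - n)).ne', mul_one]
  set d : ℕ → H := fun n => (γ (n + 1) : ℂ) • e (k - 1 - n) with hddef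
  have hdnorm : ∀ n, ‖d n‖ = γ (n + 1) := by
    intro n
    rw [hddef]
    simp only []
    rw [norm_smul, norm_basis, mul_one, Complex.norm_real, Real.norm_eq_abs,
      abs_of_pos (hγpos (n + 1))]
  have hev : ∀ b : ℝ, 0 < b → b < R → ∀ᶠ n in atTop, γ n ≤ (b⁻¹) ^ n := by
    intro b hb0 hbR
    have h1 : ∀ᶠ n in atTop, b < gmm ω k n :=
      eventually_lt_of_lt_liminf (hlim ▸ hbR) (gm_bddBelow hgm)
    filter_upwards [h1, eventually_ne_atTop 0] with n hn hn0
    have h2 : b ^ n ≤ ∏ i ∈ Finset.range n, ω (k - 1 - i) :=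
      (le_rpow_nat_inv_iff (prod_pos' hgm n).le hb0.le hn0).mp hn.le
    show (∏ i ∈ Finset.range n, ω (k - 1 - i))⁻¹ ≤ b⁻¹ ^ n
    rw [inv_pow]
    exact inv_anti₀ (by positivity) h2
  set q : FormalMultilinearSeries ℂ ℂ H :=
    fun n => ContinuousMultilinearMap.mkPiRing ℂ (Fin n) (d n) with hqdef
  have hqnorm : ∀ n, ‖q n‖ = γ (n + 1) := fun n => by
    rw [ContinuousMultilinearMap.norm_mkPiRing, hdnorm]
  have hrad : ∀ b : ℝ, 0 < b → b < R → ENNReal.ofReal b ≤ q.radius := by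
    intro b hb0 hbR
    have hev1 : ∀ᶠ n : ℕ in atTop, γ (n + 1) ≤ (b⁻¹) ^ (n + 1) :=
      (tendsto_add_atTop_nat 1).eventually (hev b hb0 hbR)
    have hbound : ∀ᶠ n in atTop, ‖q n‖ * ((b).toNNReal : ℝ) ^ n ≤ b⁻¹ := by
      filter_upwards [hev1] with n hn
      rw [hqnorm, Real.coe_toNNReal _ hb0.le]
      calc γ (n + 1) * b ^ n ≤ (b⁻¹) ^ (n + 1) * b ^ n :=
            mul_le_mul_of_nonneg_right hn (by positivity)
        _ = b⁻¹ := by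
            rw [pow_succ, mul_comm ((b⁻¹) ^ n) b⁻¹, mul_assoc, ← mul_pow,
              inv_mul_cancel₀ hb0.ne', one_pow, mul_one]
    have := q.le_radius_of_eventually_le _ hbound
    simpa [ENNReal.ofReal] using this
  refine ⟨fun z => q.sum z, ?_, ?_⟩
  · intro z hz
    have hz' : ‖z‖ < R := hz
    set b := (‖z‖ + R) / 2 with hbdef
    have hb1 : ‖z‖ < b := by rw [hbdef]; linarith
    have hb0 : 0 < b := lt_of_le_of_lt (norm_nonneg z) hb1
    have hbR : b < R := by rw [hbdef]; linarith
    have hradpos : 0 < q.radius :=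
      lt_of_lt_of_le (by simp [ENNReal.ofReal_pos, hb0]) (hrad b hb0 hbR)
    have hmem : z ∈ Metric.eball (0 : ℂ) q.radius := by
      rw [Metric.mem_eball, edist_zero_right]
      apply lt_of_lt_of_le _ (hrad b hb0 hbR)
      rw [← ofReal_norm]
      exact (ENNReal.ofReal_lt_ofReal_iff_of_nonneg (norm_nonneg _)).mpr hb1
    exact (q.hasFPowerSeriesOnBall hradpos).analyticAt_of_mem hmem
  · intro z hz
    have hz' : ‖z‖ < R := hz
    set b := (‖z‖ + R) / 2 with hbdef
    have hb1 : ‖z‖ < b := by rw [hbdef]; linarith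
    have hb0 : 0 < b := lt_of_le_of_lt (norm_nonneg z) hb1
    have hbR : b < R := by rw [hbdef]; linarith
    have hgeo : Summable (fun n : ℕ => b⁻¹ * (‖z‖ / b) ^ n) :=
      (summable_geometric_of_lt_one (by positivity) ((div_lt_one hb0).mpr hb1)).mul_left _
    have hsum0 : Summable (fun n : ℕ => z ^ n • d n) := by
      apply Summable.of_norm_bounded_eventually_nat hgeo
      filter_upwards [(tendsto_add_atTop_nat 1).eventually (hev b hb0 hbR)] with n hn
      rw [norm_smul, norm_pow, hdnorm, mul_comm]
      calc γ (n + 1) * ‖z‖ ^ n ≤ (b⁻¹) ^ (n + 1) * ‖z‖ ^ n :=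
            mul_le_mul_of_nonneg_right hn (by positivity)
        _ = b⁻¹ * (‖z‖ / b) ^ n := by
            rw [pow_succ, div_pow, div_eq_mul_inv, ← inv_pow]
            ring
    have hsumv : Summable (fun n : ℕ => z ^ n • ((γ n : ℂ) • e (k - n))) := by
      apply Summable.of_norm_bounded_eventually_nat (g := fun n : ℕ => (‖z‖ / b) ^ n)
        (summable_geometric_of_lt_one (by positivity) ((div_lt_one hb0).mpr hb1))
      filter_upwards [hev b hb0 hbR] with n hn
      rw [norm_smul, norm_pow, norm_smul, norm_basis, mul_one, Complex.norm_real,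
        Real.norm_eq_abs, abs_of_pos (hγpos n), mul_comm]
      calc γ n * ‖z‖ ^ n ≤ (b⁻¹) ^ n * ‖z‖ ^ n :=
            mul_le_mul_of_nonneg_right hn (by positivity)
        _ = (‖z‖ / b) ^ n := by
            rw [← mul_pow]
            congr 1
            rw [div_eq_mul_inv]
            ring
    have hfz : q.sum z = ∑' n : ℕ, z ^ n • d n := sum_mkPiRing d z
    show (S - z • (1 : H →L[ℂ] H)) (q.sum z) = e k
    rw [ContinuousLinearMap.sub_apply, ContinuousLinearMap.smul_apply,
      ContinuousLinearMap.one_apply, hfz]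
    have hSd : ∀ n : ℕ, S (d n) = (γ n : ℂ) • e (k - n) := by
      intro n
      rw [hddef]
      simp only []
      rw [map_smul, hS (k - 1 - n)]
      rw [smul_smul]
      have h1 : k - 1 - (n : ℤ) + 1 = k - n := by ring
      rw [h1, ← Complex.ofReal_mul, hγrec n]
    have hmapS : S (∑' n : ℕ, z ^ n • d n)
        = ∑' n : ℕ, z ^ n • ((γ n : ℂ) • e (k - n)) := by
      rw [ContinuousLinearMap.map_tsum S hsum0]
      exact tsum_congr fun n => by rw [ContinuousLinearMap.map_smul, hSd]
    rw [hmapS, Summable.tsum_eq_zero_add hsumv]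
    have h0 : (γ 0 : ℂ) = 1 := by
      rw [hγdef]; simp
    have htail : ∑' n : ℕ, z ^ (n + 1) • ((γ (n + 1) : ℂ) • e (k - (n + 1 : ℕ)))
        = z • ∑' n : ℕ, z ^ n • d n := by
      rw [← Summable.tsum_const_smul _ hsum0]
      apply tsum_congr
      intro n
      have hidx : k - ((n + 1 : ℕ) : ℤ) = k - 1 - (n : ℤ) := by push_cast; ring
      rw [hddef]
      simp only []
      rw [hidx, smul_smul, smul_smul, smul_smul]
      congr 1
      ring
    simp only [pow_zero, one_smul, h0, Nat.cast_zero, sub_zero] at *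
    rw [htail]
    abel

private lemma span_mem_goodSet (S : H →L[ℂ] H) (e : HilbertBasis ℤ ℂ H)
    {U : Set ℂ} {x : H} (hx0 : x ∈ Submodule.span ℂ (Set.range fun n : ℤ => e n))
    (hk : ∀ k : ℤ, e k ∈ goodSet S U) : x ∈ goodSet S U :=
  Submodule.span_le.mpr (by rintro _ ⟨k, rfl⟩; exact hk k) hx0

end Part1

section Part2

variable {H : Type*} [NormedAddCommGroup H] [InnerProductSpace ℂ H] [CompleteSpace H]

private lemma annulus_not_resolvent (S : H →L[ℂ] H) (e : HilbertBasis ℤ ℂ H)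
    (ω : ℤ → ℝ) (hpos : ∀ n, 0 < ω n) {M : ℝ} (hbd : ∀ n, ω n ≤ M)
    (hS : ∀ n, S (e n) = (ω n : ℂ) • e (n + 1))
    (x : H) (hx : x ≠ 0)
    (hx0 : x ∈ Submodule.span ℂ (Set.range fun n : ℤ => e n))
    {Rm Rp : ℝ} (hRm : atTop.liminf (gmm ω 0) = Rm)
    (hRp : atTop.limsup (gmp ω 0) = Rp)
    (μ : ℂ) (hμ1 : Rm ≤ ‖μ‖) (hμ2 : ‖μ‖ ≤ Rp) :
    μ ∉ localResolventSet S x := by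
  rintro ⟨U, hUo, hμU, f, hfa, hfe⟩
  obtain ⟨ε, hε, hball⟩ := Metric.isOpen_iff.mp hUo μ hμU
  set D := Metric.ball μ ε with hDdef
  have hDU : D ⊆ U := hball
  have hμD : μ ∈ D := Metric.mem_ball_self hε
  have hDo : IsOpen D := Metric.isOpen_ball
  have hDpc : IsPreconnected D := (convex_ball μ ε).isPreconnected
  have hRm0 : 0 ≤ Rm := hRm ▸ liminf_gm_nonneg (fun i => hpos _) (fun i => hbd _)
  have hRp0 : 0 ≤ Rp := hRp ▸ limsup_gm_nonneg (fun i => hpos _) (fun i => hbd _)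
  set a : ℤ → ℂ := fun n => inner ℂ (e n) x with hadef
  set h : ℤ → ℂ → ℂ := fun n z => inner ℂ (e n) (f z) with hhdef
  obtain ⟨c, hc⟩ := Finsupp.mem_span_range_iff_exists_finsupp.mp hx0
  have ha : ∀ n, a n = c n := by
    intro n
    rw [hadef]
    simp only []
    rw [← hc, Finsupp.sum, inner_sum]
    have : ∀ i ∈ c.support, (inner ℂ (e n) (c i • e i) : ℂ) = if n = i then c i else 0 := by
      intro i _
      rw [inner_smul_right, inner_basis]
      simp [mul_ite]
    rw [Finset.sum_congr rfl this, Finset.sum_ite_eq]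
    by_cases hn : n ∈ c.support
    · simp [hn]
    · simp [hn, Finsupp.notMem_support_iff.mp hn]
  have hcne : c ≠ 0 := by
    rintro rfl
    apply hx
    rw [← hc]
    simp
  have hsupp : c.support.Nonempty := Finsupp.support_nonempty_iff.mpr hcne
  set N := c.support.max' hsupp with hNdef
  set m₀ := c.support.min' hsupp with hm₀def
  have haN : a N ≠ 0 := by
    rw [ha]
    exact Finsupp.mem_support_iff.mp (c.support.max'_mem hsupp)
  have ham : a m₀ ≠ 0 := by
    rw [ha]
    exact Finsupp.mem_support_iff.mp (c.support.min'_mem hsupp)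
  have haNgt : ∀ n : ℤ, N < n → a n = 0 := by
    intro n hn
    rw [ha]
    apply Finsupp.notMem_support_iff.mp
    intro hmem
    exact absurd (c.support.le_max' n hmem) (not_le.mpr hn)
  have hamlt : ∀ n : ℤ, n < m₀ → a n = 0 := by
    intro n hn
    rw [ha]
    apply Finsupp.notMem_support_iff.mp
    intro hmem
    exact absurd (c.support.min'_le n hmem) (not_le.mpr hn)
  have hNm : m₀ ≤ N := c.support.min'_le N (c.support.max'_mem hsupp)
  have hrec : ∀ n : ℤ, ∀ z ∈ U, (ω (n - 1) : ℂ) * h (n - 1) z - z * h n z = a n := by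
    intro n z hz
    have h1 := hfe z hz
    have h2 : S (f z) - z • f z = x := by
      rw [← h1, ContinuousLinearMap.sub_apply, ContinuousLinearMap.smul_apply,
        ContinuousLinearMap.one_apply]
    have h3 := congrArg (fun y => (inner ℂ (e n) y : ℂ)) h2
    simp only [inner_sub_right, inner_smul_right] at h3
    rw [inner_S S e ω hS n (f z)] at h3
    exact h3
  have hha : ∀ n : ℤ, AnalyticOnNhd ℂ (h n) D := by
    intro n
    exact (innerSL ℂ (e n)).comp_analyticOnNhd (hfa.mono hDU)
  have hbound : ∀ (n : ℤ) (z : ℂ), ‖h n z‖ ≤ ‖f z‖ := by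
    intro n z
    rw [hhdef]
    simp only []
    calc ‖(inner ℂ (e n) (f z) : ℂ)‖ ≤ ‖e n‖ * ‖f z‖ := norm_inner_le_norm _ _
      _ = ‖f z‖ := by rw [norm_basis, one_mul]
  -- upward chain
  have hup : ∀ z ∈ U, ∀ m : ℕ,
      z ^ m * h (N + m) z = ((∏ i ∈ Finset.range m, ω (N + i) : ℝ) : ℂ) * h N z := by
    intro z hz m
    induction m with
    | zero => simp
    | succ m ih =>
        have h1 := hrec (N + m + 1) z hz
        rw [haNgt (N + m + 1) (by omega)] at h1
        have h2 : (N : ℤ) + m + 1 - 1 = N + m := by ring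
        rw [h2, sub_eq_zero] at h1
        have hidx : (N : ℤ) + ((m : ℕ) + 1 : ℕ) = N + m + 1 := by push_cast; ring
        rw [hidx]
        calc z ^ (m + 1) * h (N + m + 1) z = z ^ m * (z * h (N + m + 1) z) := by ring
          _ = z ^ m * ((ω (N + m) : ℂ) * h (N + m) z) := by rw [← h1]
          _ = (ω (N + m) : ℂ) * (z ^ m * h (N + m) z) := by ring
          _ = (ω (N + m) : ℂ) *
              (((∏ i ∈ Finset.range m, ω (N + i) : ℝ) : ℂ) * h N z) := by rw [ih]
          _ = ((∏ i ∈ Finset.range (m + 1), ω (N + i) : ℝ) : ℂ) * h N z := by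
              rw [Finset.prod_range_succ]
              push_cast
              ring
  -- Step A: pointwise vanishing of h N strictly inside radius Rp
  have hvanish : ∀ z ∈ D, z ≠ 0 → ‖z‖ < Rp → h N z = 0 := by
    intro z hzD hz0 hzR
    by_contra hne
    have hhNpos : 0 < ‖h N z‖ := norm_pos_iff.mpr hne
    set ρ := (‖z‖ + Rp) / 2 with hρdef
    have hρ1 : ‖z‖ < ρ := by rw [hρdef]; linarith
    have hρ2 : ρ < Rp := by rw [hρdef]; linarith
    have hρ0 : 0 < ρ := lt_of_le_of_lt (norm_nonneg z) hρ1
    have hfreq : ∃ᶠ m in atTop, ρ < gmp ω N m :=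
      frequently_lt_of_lt_limsup
        ((gm_bddBelow (fun i : ℕ => hpos (N + i))).isCoboundedUnder_le)
        (by rw [limsup_gmp_eq hpos hbd N, hRp]; exact hρ2)
    have htend : Tendsto (fun m : ℕ => (‖z‖ / ρ) ^ m * ‖f z‖) atTop (nhds 0) := by
      have := (tendsto_pow_atTop_nhds_zero_of_lt_one
        (div_nonneg (norm_nonneg z) hρ0.le) ((div_lt_one hρ0).mpr hρ1)).mul_const ‖f z‖
      simpa using this
    have hev2 : ∀ᶠ m in atTop, (‖z‖ / ρ) ^ m * ‖f z‖ < ‖h N z‖ :=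
      htend.eventually_lt_const hhNpos
    obtain ⟨m, hm1, hm2, hm3⟩ :=
      (hfreq.and_eventually (hev2.and (eventually_ne_atTop 0))).exists
    have hprod : ρ ^ m ≤ ∏ i ∈ Finset.range m, ω (N + i) :=
      (le_rpow_nat_inv_iff (prod_pos' (fun i : ℕ => hpos (N + i)) m).le hρ0.le hm3).mp hm1.le
    have heq := hup z (hDU hzD) m
    have heqn : ‖z‖ ^ m * ‖h (N + m) z‖
        = (∏ i ∈ Finset.range m, ω (N + i)) * ‖h N z‖ := by
      have := congrArg norm heq
      rwa [norm_mul, norm_mul, norm_pow, Complex.norm_real, Real.norm_eq_abs,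
        abs_of_pos (prod_pos' (fun i : ℕ => hpos (N + i)) m)] at this
    have hchain : ρ ^ m * ‖h N z‖ ≤ ‖z‖ ^ m * ‖f z‖ := by
      calc ρ ^ m * ‖h N z‖ ≤ (∏ i ∈ Finset.range m, ω (N + i)) * ‖h N z‖ :=
            mul_le_mul_of_nonneg_right hprod hhNpos.le
        _ = ‖z‖ ^ m * ‖h (N + m) z‖ := heqn.symm
        _ ≤ ‖z‖ ^ m * ‖f z‖ :=
            mul_le_mul_of_nonneg_left (hbound _ z) (by positivity)
    have hcontr : ‖h N z‖ ≤ (‖z‖ / ρ) ^ m * ‖f z‖ := by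
      rw [div_pow, div_mul_eq_mul_div, le_div_iff₀ (pow_pos hρ0 m)]
      calc ‖h N z‖ * ρ ^ m = ρ ^ m * ‖h N z‖ := by ring
        _ ≤ ‖z‖ ^ m * ‖f z‖ := hchain
    linarith
  -- a point of D outside the inner radius
  have houter : ∃ z₀ ∈ D, Rm < ‖z₀‖ := by
    by_cases hμ0 : μ = 0
    · refine ⟨((ε / 2 : ℝ) : ℂ), ?_, ?_⟩
      · rw [hDdef, hμ0, Metric.mem_ball, dist_zero_right]
        rw [Complex.norm_real, Real.norm_eq_abs, abs_of_pos (by linarith)]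
        linarith
      · have : Rm = 0 := le_antisymm (by rw [hμ0] at hμ1; simpa using hμ1) hRm0
        rw [this, Complex.norm_real, Real.norm_eq_abs, abs_of_pos (by linarith)]
        linarith
    · have hμn : 0 < ‖μ‖ := norm_pos_iff.mpr hμ0
      refine ⟨((1 + ε / (2 * ‖μ‖) : ℝ) : ℂ) * μ, ?_, ?_⟩
      · rw [hDdef, Metric.mem_ball, dist_eq_norm]
        have : ((1 + ε / (2 * ‖μ‖) : ℝ) : ℂ) * μ - μ = ((ε / (2 * ‖μ‖) : ℝ) : ℂ) * μ := by
          push_cast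
          ring
        rw [this, norm_mul, Complex.norm_real, Real.norm_eq_abs,
          abs_of_pos (by positivity)]
        have heq3 : ε / (2 * ‖μ‖) * ‖μ‖ = ε / 2 := by
          rw [div_mul_eq_mul_div, mul_comm (2 : ℝ) ‖μ‖, ← div_div, mul_div_assoc,
            div_self hμn.ne', mul_one]
        rw [heq3]
        linarith
      · rw [norm_mul, Complex.norm_real, Real.norm_eq_abs,
          abs_of_pos (by positivity)]
        have h1 : (1 : ℝ) < 1 + ε / (2 * ‖μ‖) := by
          have : 0 < ε / (2 * ‖μ‖) := by positivity
          linarith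
        calc Rm ≤ ‖μ‖ := hμ1
          _ < (1 + ε / (2 * ‖μ‖)) * ‖μ‖ := by
              nlinarith
  -- Step C: blow-up contradiction
  have hfinal : ∀ z₀ ∈ D, Rm < ‖z₀‖ → h (m₀ - 1) z₀ ≠ 0 → False := by
    intro z₀ hz₀D hz₀R hz₀ne
    have hdown : ∀ m : ℕ,
        ((∏ i ∈ Finset.range m, ω (m₀ - 1 - 1 - i) : ℝ) : ℂ) * h (m₀ - 1 - m) z₀
          = z₀ ^ m * h (m₀ - 1) z₀ := by
      intro m
      induction m with
      | zero => simp
      | succ m ih =>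
          have h1 := hrec (m₀ - 1 - m) z₀ (hDU hz₀D)
          rw [hamlt (m₀ - 1 - m) (by omega)] at h1
          rw [sub_eq_zero] at h1
          have hidx : m₀ - 1 - ((m : ℕ) + 1 : ℕ) = m₀ - 1 - (m : ℤ) - 1 := by push_cast; ring
          have h2 : m₀ - 1 - (m : ℤ) - 1 = m₀ - 1 - 1 - (m : ℤ) := by ring
          rw [hidx, h2]
          rw [h2] at h1
          calc ((∏ i ∈ Finset.range (m + 1), ω (m₀ - 1 - 1 - i) : ℝ) : ℂ)
                * h (m₀ - 1 - 1 - (m : ℤ)) z₀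
              = ((∏ i ∈ Finset.range m, ω (m₀ - 1 - 1 - i) : ℝ) : ℂ) *
                ((ω (m₀ - 1 - 1 - m) : ℂ) * h (m₀ - 1 - 1 - (m : ℤ)) z₀) := by
                rw [Finset.prod_range_succ]
                push_cast
                ring
            _ = ((∏ i ∈ Finset.range m, ω (m₀ - 1 - 1 - i) : ℝ) : ℂ) *
                (z₀ * h (m₀ - 1 - m) z₀) := by
                rw [h1]
            _ = z₀ * (((∏ i ∈ Finset.range m, ω (m₀ - 1 - 1 - i) : ℝ) : ℂ) *
                h (m₀ - 1 - m) z₀) := by ring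
            _ = z₀ ^ (m + 1) * h (m₀ - 1) z₀ := by
                rw [ih]
                ring
    have hhpos : 0 < ‖h (m₀ - 1) z₀‖ := norm_pos_iff.mpr hz₀ne
    set b := (Rm + ‖z₀‖) / 2 with hbdef
    have hb1 : Rm < b := by rw [hbdef]; linarith
    have hb2 : b < ‖z₀‖ := by rw [hbdef]; linarith
    have hb0 : 0 < b := lt_of_le_of_lt hRm0 hb1
    have hfreq : ∃ᶠ m in atTop, gmm ω (m₀ - 1) m < b :=
      frequently_lt_of_liminf_lt
        ((gm_bddAbove (fun i : ℕ => hpos (m₀ - 1 - 1 - i))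
          (fun i : ℕ => hbd (m₀ - 1 - 1 - i))).isCoboundedUnder_ge)
        (by rw [liminf_gmm_eq hpos hbd (m₀ - 1), hRm]; exact hb1)
    have htend : Tendsto (fun m : ℕ => (‖z₀‖ / b) ^ m) atTop atTop :=
      tendsto_pow_atTop_atTop_of_one_lt ((one_lt_div hb0).mpr hb2)
    have hev2 : ∀ᶠ m in atTop, ‖f z₀‖ / ‖h (m₀ - 1) z₀‖ < (‖z₀‖ / b) ^ m :=
      htend.eventually_gt_atTop _
    obtain ⟨m, hm1, hm2, hm3⟩ :=
      (hfreq.and_eventually (hev2.and (eventually_ne_atTop 0))).exists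
    have hQpos : 0 < ∏ i ∈ Finset.range m, ω (m₀ - 1 - 1 - i) :=
      prod_pos' (fun i : ℕ => hpos (m₀ - 1 - 1 - i)) m
    have hprod : ∏ i ∈ Finset.range m, ω (m₀ - 1 - 1 - i) ≤ b ^ m :=
      (rpow_nat_inv_le_iff hQpos.le hb0.le hm3).mp hm1.le
    have heqn : (∏ i ∈ Finset.range m, ω (m₀ - 1 - 1 - i)) * ‖h (m₀ - 1 - m) z₀‖
        = ‖z₀‖ ^ m * ‖h (m₀ - 1) z₀‖ := by
      have := congrArg norm (hdown m)
      rwa [norm_mul, norm_mul, norm_pow, Complex.norm_real, Real.norm_eq_abs,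
        abs_of_pos hQpos] at this
    have hchain : ‖z₀‖ ^ m * ‖h (m₀ - 1) z₀‖ ≤ b ^ m * ‖f z₀‖ := by
      calc ‖z₀‖ ^ m * ‖h (m₀ - 1) z₀‖
          = (∏ i ∈ Finset.range m, ω (m₀ - 1 - 1 - i)) * ‖h (m₀ - 1 - m) z₀‖ := heqn.symm
        _ ≤ b ^ m * ‖h (m₀ - 1 - m) z₀‖ :=
            mul_le_mul_of_nonneg_right hprod (norm_nonneg _)
        _ ≤ b ^ m * ‖f z₀‖ :=
            mul_le_mul_of_nonneg_left (hbound _ z₀) (by positivity)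
    have hcontr : b ^ m * ‖f z₀‖ < ‖z₀‖ ^ m * ‖h (m₀ - 1) z₀‖ := by
      rw [div_lt_iff₀ hhpos, div_pow, div_mul_eq_mul_div,
        lt_div_iff₀ (pow_pos hb0 m)] at hm2
      calc b ^ m * ‖f z₀‖ = ‖f z₀‖ * b ^ m := by ring
        _ < ‖z₀‖ ^ m * ‖h (m₀ - 1) z₀‖ := hm2
    linarith
  -- final case analysis
  by_cases h0D : (0 : ℂ) ∈ D
  · -- 0 ∈ D : h (m₀ - 1) cannot vanish identically on D
    have hnotall : ¬ Set.EqOn (h (m₀ - 1)) 0 D := by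
      intro hEq
      have h1 := hrec m₀ (0 : ℂ) (hDU h0D)
      rw [hEq h0D] at h1
      simp at h1
      exact ham h1.symm
    obtain ⟨z₀, hz₀D, hz₀R⟩ := houter
    by_cases hW : ∀ z ∈ D, Rm < ‖z‖ → h (m₀ - 1) z = 0
    · apply hnotall
      have hWo : IsOpen {z : ℂ | Rm < ‖z‖} := isOpen_lt continuous_const continuous_norm
      have hev0 : h (m₀ - 1) =ᶠ[nhds z₀] 0 := by
        have hmem : D ∩ {z : ℂ | Rm < ‖z‖} ∈ nhds z₀ :=
          (hDo.inter hWo).mem_nhds ⟨hz₀D, hz₀R⟩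
        filter_upwards [hmem] with w hw
        exact hW w hw.1 hw.2
      exact (hha (m₀ - 1)).eqOn_zero_of_preconnected_of_eventuallyEq_zero hDpc hz₀D hev0
    · push_neg at hW
      obtain ⟨z₁, hz₁D, hz₁R, hz₁ne⟩ := hW
      exact hfinal z₁ hz₁D hz₁R hz₁ne
  · -- 0 ∉ D
    have hμ0 : μ ≠ 0 := by
      rintro rfl
      exact h0D hμD
    have hμn : 0 < ‖μ‖ := norm_pos_iff.mpr hμ0
    have hRpp : 0 < Rp := lt_of_lt_of_le hμn hμ2
    -- every z in D is nonzero
    have hzne : ∀ z ∈ D, z ≠ 0 := by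
      intro z hz h0
      rw [h0] at hz
      exact h0D hz
    -- a point of D strictly inside the outer radius
    have hεμ : ε ≤ ‖μ‖ := by
      by_contra hlt
      push_neg at hlt
      apply h0D
      rw [hDdef, Metric.mem_ball, dist_zero_left]
      exact hlt
    have hinnerpt : ∃ z₁ ∈ D, ‖z₁‖ < Rp := by
      refine ⟨((1 - ε / (2 * ‖μ‖) : ℝ) : ℂ) * μ, ?_, ?_⟩
      · rw [hDdef, Metric.mem_ball, dist_eq_norm]
        have heq2 : ((1 - ε / (2 * ‖μ‖) : ℝ) : ℂ) * μ - μ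
            = -(((ε / (2 * ‖μ‖) : ℝ) : ℂ) * μ) := by
          push_cast
          ring
        rw [heq2, norm_neg, norm_mul, Complex.norm_real, Real.norm_eq_abs,
          abs_of_pos (by positivity)]
        have heq3 : ε / (2 * ‖μ‖) * ‖μ‖ = ε / 2 := by
          rw [div_mul_eq_mul_div, mul_comm (2 : ℝ) ‖μ‖, ← div_div, mul_div_assoc,
            div_self hμn.ne', mul_one]
        rw [heq3]
        linarith
      · rw [norm_mul, Complex.norm_real, Real.norm_eq_abs]
        have ht1 : 0 < 1 - ε / (2 * ‖μ‖) := by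
          have : ε / (2 * ‖μ‖) ≤ 1 / 2 := by
            rw [div_le_div_iff₀ (by positivity) (by norm_num)]
            linarith
          linarith
        rw [abs_of_pos ht1]
        calc (1 - ε / (2 * ‖μ‖)) * ‖μ‖ < 1 * ‖μ‖ := by
              apply mul_lt_mul_of_pos_right _ hμn
              have : 0 < ε / (2 * ‖μ‖) := by positivity
              linarith
          _ = ‖μ‖ := one_mul _
          _ ≤ Rp := hμ2
    obtain ⟨z₁, hz₁D, hz₁R⟩ := hinnerpt
    -- h N vanishes identically on D
    have hN0 : Set.EqOn (h N) 0 D := by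
      have hWo : IsOpen {z : ℂ | ‖z‖ < Rp} := isOpen_lt continuous_norm continuous_const
      have hev0 : h N =ᶠ[nhds z₁] 0 := by
        have hmem : D ∩ {z : ℂ | ‖z‖ < Rp} ∈ nhds z₁ :=
          (hDo.inter hWo).mem_nhds ⟨hz₁D, hz₁R⟩
        filter_upwards [hmem] with w hw
        exact hvanish w hw.1 (hzne w hw.1) hw.2
      exact (hha N).eqOn_zero_of_preconnected_of_eventuallyEq_zero hDpc hz₁D hev0
    -- polynomial descent
    set P : ℕ → Polynomial ℂ := fun j => Nat.rec
      (Polynomial.C (a N * ((ω (N - 1) : ℂ))⁻¹))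
      (fun j Pj => Polynomial.C ((ω (N - j - 2) : ℂ))⁻¹ *
        (Polynomial.C (a (N - j - 1)) + Polynomial.X * Pj)) j with hPdef
    have hP0succ : ∀ j : ℕ, P (j + 1) = Polynomial.C ((ω (N - j - 2) : ℂ))⁻¹ *
        (Polynomial.C (a (N - j - 1)) + Polynomial.X * P j) := fun j => rfl
    have hωne : ∀ n : ℤ, (ω n : ℂ) ≠ 0 := fun n => by
      simpa using (hpos n).ne'
    have hPval : ∀ j : ℕ, ∀ z ∈ D, h (N - 1 - j) z = (P j).eval z := by
      intro j
      induction j with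
      | zero =>
          intro z hz
          have h1 := hrec N z (hDU hz)
          rw [hN0 hz] at h1
          simp only [Pi.zero_apply, mul_zero, sub_zero] at h1
          have : h (N - 1) z = a N * ((ω (N - 1) : ℂ))⁻¹ := by
            rw [eq_mul_inv_iff_mul_eq₀ (hωne (N - 1)), mul_comm]
            exact h1
          rw [hPdef]
          simpa using this
      | succ j ih =>
          intro z hz
          have h1 := hrec (N - 1 - j) z (hDU hz)
          rw [ih z hz] at h1
          have hidx : N - 1 - ((j : ℕ) + 1 : ℕ) = N - 1 - (j : ℤ) - 1 := by push_cast; ring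
          rw [hidx]
          have h2 : h (N - 1 - (j : ℤ) - 1) z
              = ((ω (N - 1 - (j : ℤ) - 1) : ℂ))⁻¹ * (a (N - 1 - j) + z * (P j).eval z) := by
            have h3 : (ω (N - 1 - (j : ℤ) - 1) : ℂ) * h (N - 1 - (j : ℤ) - 1) z
                = a (N - 1 - j) + z * (P j).eval z := by
              rw [← h1]; ring
            rw [eq_inv_mul_iff_mul_eq₀ (hωne (N - 1 - (j : ℤ) - 1))]
            exact h3
          rw [h2, hP0succ j]
          simp only [Polynomial.eval_mul, Polynomial.eval_C, Polynomial.eval_add,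
            Polynomial.eval_X]
          have hi1 : N - (j : ℤ) - 2 = N - 1 - (j : ℤ) - 1 := by ring
          have hi2 : N - (j : ℤ) - 1 = N - 1 - (j : ℤ) := by ring
          rw [hi1, hi2]
    have hPval0 : ∀ j : ℕ, (P j).eval 0 = a (N - j) * ((ω (N - j - 1) : ℂ))⁻¹ := by
      intro j
      induction j with
      | zero => rw [hPdef]; simp
      | succ j ih =>
          rw [hP0succ j]
          simp only [Polynomial.eval_mul, Polynomial.eval_C, Polynomial.eval_add,
            Polynomial.eval_X, zero_mul, mul_zero, add_zero]
          have hi1 : N - ((j : ℕ) + 1 : ℕ) = N - (j : ℤ) - 1 := by push_cast; ring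
          have hi2 : N - ((j : ℕ) + 1 : ℕ) - 1 = N - (j : ℤ) - 2 := by push_cast; ring
          rw [hi2, hi1]
          ring
    set J := (N - m₀).toNat with hJdef
    have hJeq : (J : ℤ) = N - m₀ := Int.toNat_of_nonneg (by omega)
    have hm₀idx : N - 1 - (J : ℤ) = m₀ - 1 := by rw [hJeq]; ring
    have hP0 : (P J).eval 0 ≠ 0 := by
      rw [hPval0]
      have hi : N - (J : ℤ) = m₀ := by rw [hJeq]; ring
      rw [hi]
      exact mul_ne_zero ham (inv_ne_zero (hωne _))
    have hPne : P J ≠ 0 := by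
      intro hP
      apply hP0
      rw [hP]
      simp
    have hroots : Dense {z : ℂ | ¬ (P J).IsRoot z} := by
      have := (Polynomial.finite_setOf_isRoot hPne).countable.dense_compl ℂ
      convert this using 1
      rfl
    have hWo : IsOpen {z : ℂ | Rm < ‖z‖} := isOpen_lt continuous_const continuous_norm
    obtain ⟨z₀, hz₀D, hz₀R⟩ := houter
    obtain ⟨z₂, hz₂mem, hz₂root⟩ :=
      hroots.inter_open_nonempty (D ∩ {z : ℂ | Rm < ‖z‖}) (hDo.inter hWo)
        ⟨z₀, hz₀D, hz₀R⟩
    apply hfinal z₂ hz₂mem.1 hz₂mem.2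
    rw [← hm₀idx, hPval J z₂ hz₂mem.1]
    exact hz₂root

end Part2


variable {H : Type*} [NormedAddCommGroup H] [InnerProductSpace ℂ H] [CompleteSpace H]

/-- For a bilateral weighted shift `S` with positive bounded weights and every non-zero
finitely supported vector `x` (a finite linear combination of the basis vectors `e n`),
`σ_S(x) = {λ : r₂⁻(S) ≤ |λ| ≤ r₃⁺(S)}` where `r₂⁻(S) = liminf (1/β₋ₙ)^(1/n)` and
`r₃⁺(S) = limsup (βₙ)^(1/n)`. -/
theorem bilateral_localSpectrum_finitely_supported (S : H →L[ℂ] H)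
    (e : HilbertBasis ℤ ℂ H) (ω : ℤ → ℝ) (hpos : ∀ n, 0 < ω n)
    (hbd : ∃ M : ℝ, ∀ n, ω n ≤ M)
    (hS : ∀ n, S (e n) = (ω n : ℂ) • e (n + 1))
    (x : H) (hx : x ≠ 0)
    (hx0 : x ∈ Submodule.span ℂ (Set.range fun n : ℤ => e n)) :
    localSpectrum S x =
      {μ : ℂ |
        (atTop.liminf fun n : ℕ =>
          (∏ i ∈ Finset.range n, ω (-(i : ℤ) - 1)) ^ ((n : ℝ)⁻¹)) ≤ ‖μ‖ ∧
        ‖μ‖ ≤ atTop.limsup fun n : ℕ =>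
          (∏ i ∈ Finset.range n, ω (i : ℤ)) ^ ((n : ℝ)⁻¹)} := by
  obtain ⟨M, hM⟩ := hbd
  set Rm := atTop.liminf fun n : ℕ =>
    (∏ i ∈ Finset.range n, ω (-(i : ℤ) - 1)) ^ ((n : ℝ)⁻¹) with hRmdef
  set Rp := atTop.limsup fun n : ℕ =>
    (∏ i ∈ Finset.range n, ω (i : ℤ)) ^ ((n : ℝ)⁻¹) with hRpdef
  have hgmm0 : gmm ω 0 = fun n : ℕ =>
      (∏ i ∈ Finset.range n, ω (-(i : ℤ) - 1)) ^ ((n : ℝ)⁻¹) := by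
    funext n
    unfold gmm gm
    congr 1
    exact Finset.prod_congr rfl fun i _ => congrArg ω (by ring)
  have hgmp0 : gmp ω 0 = fun n : ℕ =>
      (∏ i ∈ Finset.range n, ω (i : ℤ)) ^ ((n : ℝ)⁻¹) := by
    funext n
    unfold gmp gm
    congr 1
    exact Finset.prod_congr rfl fun i _ => congrArg ω (by ring)
  have hRm : atTop.liminf (gmm ω 0) = Rm := by rw [hgmm0]
  have hRp : atTop.limsup (gmp ω 0) = Rp := by rw [hgmp0]
  ext μ
  simp only [localSpectrum, Set.mem_compl_iff, Set.mem_setOf_eq]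
  constructor
  · intro hspec
    by_contra hcon
    rw [not_and_or] at hcon
    apply hspec
    rcases hcon with hcon | hcon
    · push_neg at hcon
      have hall : ∀ k : ℤ, e k ∈ goodSet S {z : ℂ | ‖z‖ < Rm} := fun k =>
        basis_mem_goodSet_inner S e ω hpos hM hS k ((liminf_gmm_eq hpos hM k).trans hRm)
      obtain ⟨f, hf, hfe⟩ := span_mem_goodSet S e hx0 hall
      exact ⟨_, isOpen_lt continuous_norm continuous_const, hcon, f, hf, hfe⟩
    · push_neg at hcon
      have hall : ∀ k : ℤ, e k ∈ goodSet S {z : ℂ | Rp < ‖z‖} := fun k =>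
        basis_mem_goodSet_outer S e ω hpos hM hS k ((limsup_gmp_eq hpos hM k).trans hRp)
      obtain ⟨f, hf, hfe⟩ := span_mem_goodSet S e hx0 hall
      exact ⟨_, isOpen_lt continuous_const continuous_norm, hcon, f, hf, hfe⟩
  · rintro ⟨h1, h2⟩
    exact annulus_not_resolvent S e ω hpos hM hS x hx hx0 hRm hRp μ h1 h2
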